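/- Fix a prime power q, integers n ≥ 2 and 1 ≤ w ≤ n, and c ∈ F_q; if q = 2, further assume w ≠ n. If the function Δ_{w,c} : Z/(q^n−1)Z → F_q defined by Δ_{w,c} = δ_0 − ((−1)^w δ_w − c δ_0)^{⊗(q−1)} has least period r with r not dividing (q^n−1)/Φ_n(q), then there exists a monic irreducible polynomial P(x) of degree n over F_q with [x^{n−w}]P(x) = c. -/

import Mathlib

open scoped Classical

noncomputable section

/-- `g` is `r`-periodic on `Z/NZ`. -/
def IsPeriodOf {N : ℕ} {α : Type*} (g : ZMod N → α) (r : ℕ) : Prop :=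
  ∀ m : ZMod N, g (m + (r : ZMod N)) = g m

/-- `r` is the least period of `g`. -/
def IsLeastPeriod {N : ℕ} {α : Type*} (g : ZMod N → α) (r : ℕ) : Prop :=
  0 < r ∧ IsPeriodOf g r ∧ ∀ s : ℕ, 0 < s → IsPeriodOf g s → r ≤ s

/-- `δ_w : Z/(q^n-1)Z → F`, the characteristic function of the set `Ω(w)` of
elements whose canonical representative is `q^{i_1} + ⋯ + q^{i_w}` for some
`0 ≤ i_1 < ⋯ < i_w ≤ n-1` (for `w = 0` this is the Kronecker delta at `0`). -/
def deltaFn (F : Type*) [Zero F] [One F] (q n w : ℕ) : ZMod (q ^ n - 1) → F :=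
  fun k =>
    if ∃ s ∈ Finset.powersetCard w (Finset.range n), k.val = ∑ i ∈ s, q ^ i then 1
    else 0

/-- Convolution of functions on `Z/NZ`: `(f ⊗ g)(i) = ∑_{j+k=i} f(j) g(k)`. -/
def conv {N : ℕ} [NeZero N] {R : Type*} [NonUnitalNonAssocSemiring R]
    (f g : ZMod N → R) : ZMod N → R :=
  fun i => ∑ j : ZMod N, f j * g (i - j)

/-- The `m`-th convolution power `f^{⊗m}`, with `f^{⊗0} = δ_0`. -/
def convPow {N : ℕ} [NeZero N] {R : Type*} [Semiring R] (f : ZMod N → R) :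
    ℕ → ZMod N → R
  | 0 => fun i => if i = 0 then 1 else 0
  | m + 1 => conv f (convPow f m)

/-- `Δ_{w,c} = δ_0 - ((-1)^w δ_w - c δ_0)^{⊗(q-1)} : Z/(q^n-1)Z → F_q`. -/
def Delta (F : Type*) [Field F] (q n w : ℕ) [NeZero (q ^ n - 1)] (c : F) :
    ZMod (q ^ n - 1) → F :=
  fun i => deltaFn F q n 0 i -
    convPow (fun k => (-1 : F) ^ w * deltaFn F q n w k - c * deltaFn F q n 0 k)
      (q - 1) i


set_option linter.unusedSectionVars false
set_option linter.unusedVariables false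

open Finset Polynomial IntermediateField
section periods

variable {N : ℕ} {α : Type*} {g : ZMod N → α}

lemma isPeriodOf_add {a b : ℕ} (ha : IsPeriodOf g a) (hb : IsPeriodOf g b) :
    IsPeriodOf g (a + b) := by
  intro m
  have := ha (m + (b : ZMod N))
  rw [hb m] at this
  rw [← this]
  push_cast
  ring_nf

lemma isPeriodOf_mul (k : ℕ) {r : ℕ} (hr : IsPeriodOf g r) : IsPeriodOf g (k * r) := by
  induction k with
  | zero => intro m; simp
  | succ k ih =>
      have := isPeriodOf_add ih hr
      intro m
      have h2 := this m
      rw [← h2]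
      congr 1
      push_cast
      ring

lemma least_period_dvd {r M : ℕ} (hr : IsLeastPeriod g r) (hM : IsPeriodOf g M) :
    r ∣ M := by
  obtain ⟨hrpos, hrper, hrmin⟩ := hr
  have hrem : IsPeriodOf g (M % r) := by
    intro m
    have h1 : IsPeriodOf g (M / r * r) := isPeriodOf_mul _ hrper
    have := h1 (m + ((M % r : ℕ) : ZMod N))
    calc g (m + ((M % r : ℕ) : ZMod N)) = g (m + ((M % r : ℕ) : ZMod N) + ((M / r * r : ℕ) : ZMod N)) := (this).symm
    _ = g (m + ((M : ℕ) : ZMod N)) := by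
          congr 1
          have hMr : (M % r) + (M / r * r) = M := Nat.mod_add_div' M r
          rw [add_assoc, ← Nat.cast_add, hMr]
    _ = g m := hM m
  rcases Nat.eq_zero_or_pos (M % r) with h0 | hpos
  · exact Nat.dvd_of_mod_eq_zero h0
  · have := hrmin _ hpos hrem
    have h2 := Nat.mod_lt M hrpos
    omega
end periods

section natsum
variable {q : ℕ}

lemma sum_pow_range_le (hq : 2 ≤ q) (n : ℕ) : ∑ i ∈ range n, q ^ i ≤ q ^ n - 1 := by
  induction n with
  | zero => simp
  | succ n ih =>
      rw [Finset.sum_range_succ]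
      have h1 : 1 ≤ q ^ n := Nat.one_le_pow _ _ (by omega)
      have h2 : q ^ (n+1) = q * q ^ n := by ring
      have h3 : 2 * q ^ n ≤ q * q ^ n := Nat.mul_le_mul_right _ hq
      omega

lemma sum_pow_le_of_subset (hq : 2 ≤ q) {n : ℕ} {s : Finset ℕ} (hs : s ⊆ range n) :
    ∑ i ∈ s, q ^ i ≤ q ^ n - 1 :=
  le_trans (Finset.sum_le_sum_of_subset hs) (sum_pow_range_le hq n)

lemma sum_pow_inj (hq : 2 ≤ q) :
    ∀ (n : ℕ) (s t : Finset ℕ), s ⊆ range n → t ⊆ range n →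
      (∑ i ∈ s, q ^ i) = ∑ i ∈ t, q ^ i → s = t := by
  intro n
  induction n with
  | zero => intro s t hs ht _; simp only [range_zero, Finset.subset_empty] at hs ht; rw [hs, ht]
  | succ n ih =>
      intro s t hs ht hsum
      have key : ∀ u v : Finset ℕ, u ⊆ range (n+1) → v ⊆ range (n+1) →
          (∑ i ∈ u, q ^ i) = ∑ i ∈ v, q ^ i → n ∈ u → n ∈ v := by
        intro u v hu hv huv hnu
        by_contra hnv
        have hv' : v ⊆ range n := by
          intro x hx
          have := hv hx
          simp only [Finset.mem_range] at this ⊢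
          rcases Nat.lt_succ_iff_lt_or_eq.mp this with h | rfl
          · exact h
          · exact absurd hx hnv
        have h1 : q ^ n ≤ ∑ i ∈ u, q ^ i := Finset.single_le_sum (fun i _ => Nat.zero_le _) hnu
        have h2 : ∑ i ∈ v, q ^ i ≤ q ^ n - 1 := sum_pow_le_of_subset hq hv'
        have h3 : 1 ≤ q ^ n := Nat.one_le_pow _ _ (by omega)
        omega
      by_cases hns : n ∈ s
      · have hnt : n ∈ t := key s t hs ht hsum hns
        have hs' : s.erase n ⊆ range n := by
          intro x hx
          have hx1 := Finset.mem_of_mem_erase hx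
          have hx2 := Finset.ne_of_mem_erase hx
          have := hs hx1
          simp only [Finset.mem_range] at this ⊢
          omega
        have ht' : t.erase n ⊆ range n := by
          intro x hx
          have hx1 := Finset.mem_of_mem_erase hx
          have hx2 := Finset.ne_of_mem_erase hx
          have := ht hx1
          simp only [Finset.mem_range] at this ⊢
          omega
        have hes : ∑ i ∈ s.erase n, q ^ i = ∑ i ∈ s, q ^ i - q ^ n := by
          rw [← Finset.add_sum_erase _ _ hns]; omega
        have het : ∑ i ∈ t.erase n, q ^ i = ∑ i ∈ t, q ^ i - q ^ n := by
          rw [← Finset.add_sum_erase _ _ hnt]; omega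
        have := ih (s.erase n) (t.erase n) hs' ht' (by rw [hes, het, hsum])
        have h1 : s = insert n (s.erase n) := (Finset.insert_erase hns).symm
        have h2 : t = insert n (t.erase n) := (Finset.insert_erase hnt).symm
        rw [h1, h2, this]
      · have hnt : n ∉ t := fun hnt => hns (key t s ht hs hsum.symm hnt)
        have hs' : s ⊆ range n := by
          intro x hx
          have := hs hx
          simp only [Finset.mem_range] at this ⊢
          rcases Nat.lt_succ_iff_lt_or_eq.mp this with h | rfl
          · exact h
          · exact absurd hx hns
        have ht' : t ⊆ range n := by
          intro x hx
          have := ht hx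
          simp only [Finset.mem_range] at this ⊢
          rcases Nat.lt_succ_iff_lt_or_eq.mp this with h | rfl
          · exact h
          · exact absurd hx hnt
        exact ih s t hs' ht' hsum
end natsum
section hat

variable {N : ℕ} [NeZero N] {K : Type*} [Field K]

def hatF (f : ZMod N → K) (α : K) : K := ∑ k : ZMod N, f k * α ^ k.val

variable {α : K}

lemma pow_mod_of_pow_eq_one (hα : α ^ N = 1) (m : ℕ) : α ^ (m % N) = α ^ m := by
  conv_rhs => rw [← Nat.mod_add_div m N]
  rw [pow_add, pow_mul, hα, one_pow, mul_one]

lemma pow_val_natCast (hα : α ^ N = 1) (m : ℕ) : α ^ ((m : ZMod N)).val = α ^ m := by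
  rw [ZMod.val_natCast, pow_mod_of_pow_eq_one hα]

lemma pow_val_add (hα : α ^ N = 1) (a b : ZMod N) :
    α ^ (a + b).val = α ^ a.val * α ^ b.val := by
  rw [ZMod.val_add, pow_mod_of_pow_eq_one hα, pow_add]

lemma hatF_conv (f g : ZMod N → K) (hα : α ^ N = 1) :
    hatF (conv f g) α = hatF f α * hatF g α := by
  unfold hatF conv
  have key : ∀ j : ZMod N, ∑ i : ZMod N, g (i - j) * α ^ i.val
      = (∑ k : ZMod N, g k * α ^ k.val) * α ^ j.val := by
    intro j
    rw [Finset.sum_mul]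
    symm
    apply Fintype.sum_equiv (Equiv.addRight j)
    intro k
    simp only [Equiv.coe_addRight, add_sub_cancel_right]
    rw [pow_val_add hα, mul_assoc]
  calc ∑ i : ZMod N, (∑ j : ZMod N, f j * g (i - j)) * α ^ i.val
      = ∑ i : ZMod N, ∑ j : ZMod N, f j * (g (i - j) * α ^ i.val) := by
        apply Finset.sum_congr rfl; intro i _; rw [Finset.sum_mul]
        apply Finset.sum_congr rfl; intro j _; ring
    _ = ∑ j : ZMod N, ∑ i : ZMod N, f j * (g (i - j) * α ^ i.val) := Finset.sum_comm
    _ = ∑ j : ZMod N, f j * ((∑ k : ZMod N, g k * α ^ k.val) * α ^ j.val) := by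
        apply Finset.sum_congr rfl; intro j _
        rw [← Finset.mul_sum, key j]
    _ = (∑ k : ZMod N, f k * α ^ k.val) * ∑ k : ZMod N, g k * α ^ k.val := by
        rw [Finset.sum_mul]
        apply Finset.sum_congr rfl; intro j _; ring

lemma hatF_deltaZero : hatF (fun i : ZMod N => if i = 0 then (1 : K) else 0) α = 1 := by
  unfold hatF
  rw [Finset.sum_congr rfl (fun k _ => by rw [ite_mul, one_mul, zero_mul])]
  rw [Finset.sum_ite_eq' Finset.univ (0 : ZMod N) (fun k => α ^ k.val)]
  simp [ZMod.val_zero]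

lemma hatF_convPow (f : ZMod N → K) (hα : α ^ N = 1) (m : ℕ) :
    hatF (convPow f m) α = (hatF f α) ^ m := by
  induction m with
  | zero =>
      simp only [convPow, pow_zero]
      exact hatF_deltaZero
  | succ m ih => rw [convPow, hatF_conv _ _ hα, ih, pow_succ, mul_comm]

lemma hatF_sub (f g : ZMod N → K) :
    hatF (fun k => f k - g k) α = hatF f α - hatF g α := by
  unfold hatF
  rw [← Finset.sum_sub_distrib]
  exact Finset.sum_congr rfl fun k _ => by ring

lemma hatF_const_mul (a : K) (f : ZMod N → K) :
    hatF (fun k => a * f k) α = a * hatF f α := by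
  unfold hatF
  rw [Finset.mul_sum]
  exact Finset.sum_congr rfl fun k _ => by ring

end hat

section maps
variable {N : ℕ} [NeZero N] {F K : Type*} [Field F] [Field K] (φ : F →+* K)

lemma conv_map (f g : ZMod N → F) (i : ZMod N) :
    φ (conv f g i) = conv (fun k => φ (f k)) (fun k => φ (g k)) i := by
  simp [conv, map_sum, map_mul]

lemma convPow_map (f : ZMod N → F) (m : ℕ) (i : ZMod N) :
    φ (convPow f m i) = convPow (fun k => φ (f k)) m i := by
  induction m generalizing i with
  | zero => simp [convPow, apply_ite]
  | succ m ih =>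
      rw [convPow, convPow, conv_map]
      simp only [conv]
      exact Finset.sum_congr rfl fun j _ => by rw [ih]

lemma deltaFn_map (q n w : ℕ) (k : ZMod (q ^ n - 1)) :
    φ (deltaFn F q n w k) = deltaFn K q n w k := by
  unfold deltaFn
  rw [apply_ite φ, map_one, map_zero]
end maps


section cyc
variable {q n : ℕ}

lemma cast_qn_sub_one (hq : 2 ≤ q) (n : ℕ) : ((q ^ n - 1 : ℕ) : ℤ) = (q : ℤ) ^ n - 1 := by
  have : 1 ≤ q ^ n := Nat.one_le_pow _ _ (by omega)
  push_cast [Nat.cast_sub this]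
  ring

lemma Phi_pos (hq : 2 ≤ q) (n : ℕ) : 0 < (Polynomial.cyclotomic n ℤ).eval (q : ℤ) :=
  Polynomial.cyclotomic_pos' n (by exact_mod_cast hq)

lemma Phi_dvd (hq : 2 ≤ q) (n : ℕ) :
    ((Polynomial.cyclotomic n ℤ).eval (q : ℤ)).toNat ∣ q ^ n - 1 := by
  have h1 : (Polynomial.cyclotomic n ℤ).eval (q : ℤ) ∣ (q : ℤ) ^ n - 1 := by
    have := Polynomial.cyclotomic.dvd_X_pow_sub_one n ℤ
    have h2 := Polynomial.eval_dvd (x := (q : ℤ)) this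
    simpa using h2
  rw [← Int.natCast_dvd_natCast]
  rw [Int.toNat_of_nonneg (Phi_pos hq n).le, cast_qn_sub_one hq]
  exact h1

lemma M_mul_Phi (hq : 2 ≤ q) (n : ℕ) :
    (q ^ n - 1) / ((Polynomial.cyclotomic n ℤ).eval (q : ℤ)).toNat
      * ((Polynomial.cyclotomic n ℤ).eval (q : ℤ)).toNat = q ^ n - 1 :=
  Nat.div_mul_cancel (Phi_dvd hq n)

lemma qd_dvd_M (hq : 2 ≤ q) {d : ℕ} (hd : d ∣ n) (hdn : d < n) (hdpos : 0 < d) :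
    q ^ d - 1 ∣ (q ^ n - 1) / ((Polynomial.cyclotomic n ℤ).eval (q : ℤ)).toNat := by
  set Φ : ℤ := (Polynomial.cyclotomic n ℤ).eval (q : ℤ) with hΦ
  set M : ℕ := (q ^ n - 1) / Φ.toNat with hM
  have hΦpos := Phi_pos hq n
  have hMP : (M : ℤ) * Φ = (q : ℤ) ^ n - 1 := by
    have := M_mul_Phi hq n
    have h2 : ((M * Φ.toNat : ℕ) : ℤ) = ((q ^ n - 1 : ℕ) : ℤ) := by rw [this]
    rw [cast_qn_sub_one hq] at h2
    rw [← h2]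
    push_cast [Int.toNat_of_nonneg (show 0 ≤ Φ from hΦpos.le)]
    ring
  have hdprop : d ∈ n.properDivisors := Nat.mem_properDivisors.mpr ⟨hd, hdn⟩
  have h1 : ((X : ℤ[X]) ^ d - 1) * Polynomial.cyclotomic n ℤ ∣ (X : ℤ[X]) ^ n - 1 :=
    Polynomial.X_pow_sub_one_mul_cyclotomic_dvd_X_pow_sub_one_of_dvd ℤ hdprop
  have h2 : ((q : ℤ) ^ d - 1) * Φ ∣ (q : ℤ) ^ n - 1 := by
    have h3 := Polynomial.eval_dvd (x := (q : ℤ)) h1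
    simpa using h3
  obtain ⟨e, he⟩ := h2
  rw [← hMP] at he
  have h4 : (M : ℤ) = ((q : ℤ) ^ d - 1) * e := by
    have h5 : (M : ℤ) * Φ = (((q : ℤ) ^ d - 1) * e) * Φ := by rw [he]; ring
    exact mul_right_cancel₀ hΦpos.ne' h5
  have h6 : ((q ^ d - 1 : ℕ) : ℤ) ∣ (M : ℤ) := by
    rw [cast_qn_sub_one hq d]
    exact ⟨e, h4⟩
  exact_mod_cast h6

lemma geom_mul (hq : 2 ≤ q) (n : ℕ) :
    (q - 1) * ∑ i ∈ range n, q ^ i = q ^ n - 1 := by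
  induction n with
  | zero => simp
  | succ n ih =>
      rw [Finset.sum_range_succ, Nat.mul_add, ih]
      have h1 : 1 ≤ q ^ n := Nat.one_le_pow _ _ (by omega)
      have h2 : q ^ (n + 1) = q * q ^ n := by rw [pow_succ, mul_comm]
      have h3 : (q - 1) * q ^ n = q * q ^ n - q ^ n := by
        rw [Nat.sub_mul, one_mul]
      have h4 : q ^ n ≤ q * q ^ n := Nat.le_mul_of_pos_left _ (by omega)
      rw [h3, h2]
      omega
end cyc


section fixedpts
variable {Fq : Type} [Field Fq] [Fintype Fq] {q : ℕ}

lemma exists_algebraMap_eq_of_pow_card (hcard : Fintype.card Fq = q)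
    {K : Type*} [Field K] [Algebra Fq K] {x : K}
    (hx : x ^ q = x) : ∃ y : Fq, algebraMap Fq K y = x := by
  subst hcard
  set q := Fintype.card Fq with hq
  have hq1 : 1 < q := Fintype.one_lt_card
  set P : K[X] := X ^ q - X with hP
  have hdeg : P.natDegree = q := FiniteField.X_pow_card_sub_X_natDegree_eq K hq1
  have hne : P ≠ 0 := FiniteField.X_pow_card_sub_X_ne_zero K hq1
  by_contra hcon
  push_neg at hcon
  set T : Finset K := insert x ((Finset.univ : Finset Fq).image (algebraMap Fq K)) with hT
  have hnotmem : x ∉ (Finset.univ : Finset Fq).image (algebraMap Fq K) := by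
    intro hmem
    obtain ⟨y, _, hy⟩ := Finset.mem_image.mp hmem
    exact hcon y hy
  have hcardT : T.card = q + 1 := by
    rw [hT, Finset.card_insert_of_notMem hnotmem,
      Finset.card_image_of_injective _ (algebraMap Fq K).injective, Finset.card_univ]
  have hroot : ∀ z ∈ T, z ∈ P.roots.toFinset := by
    intro z hz
    rw [Multiset.mem_toFinset, Polynomial.mem_roots hne]
    have hzq : z ^ q = z := by
      rcases Finset.mem_insert.mp hz with rfl | hz'
      · exact hx
      · obtain ⟨y, _, rfl⟩ := Finset.mem_image.mp hz'
        rw [← map_pow, FiniteField.pow_card]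
    simp [hP, Polynomial.IsRoot, hzq]
  have h1 : T.card ≤ P.roots.toFinset.card := Finset.card_le_card hroot
  have h2 : P.roots.toFinset.card ≤ Multiset.card P.roots := Multiset.toFinset_card_le _
  have h3 : Multiset.card P.roots ≤ P.natDegree := Polynomial.card_roots' P
  omega

end fixedpts

section Kconstruction

variable (Fq : Type) [Field Fq] (q n : ℕ)

def KF : Type := Polynomial.SplittingField (X ^ q ^ n - X : Fq[X])

instance : Field (KF Fq q n) := inferInstanceAs (Field (SplittingField _))
instance : Algebra Fq (KF Fq q n) := inferInstanceAs (Algebra Fq (SplittingField _))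
instance : FiniteDimensional Fq (KF Fq q n) :=
  inferInstanceAs (FiniteDimensional Fq (SplittingField _))
instance [Finite Fq] : Finite (KF Fq q n) :=
  inferInstanceAs (Finite (SplittingField _))

variable {Fq q n} [Fintype Fq]

lemma KF_pow_card (hcard : Fintype.card Fq = q) (hn : n ≠ 0) (x : KF Fq q n) :
    x ^ q ^ n = x := by
  revert x
  set K := KF Fq q n with hK
  intro x
  set p := ringChar Fq with hpdef
  haveI hcharFq : CharP Fq p := ringChar.charP Fq
  obtain ⟨a, hp, hqa⟩ := FiniteField.card Fq p
  rw [hcard] at hqa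
  haveI : Fact p.Prime := ⟨hp⟩
  haveI : CharP K p := charP_of_injective_algebraMap (algebraMap Fq K).injective p
  haveI : ExpChar K p := ExpChar.prime hp
  have hq1 : 1 < q := hcard ▸ Fintype.one_lt_card
  have hqn : q ^ n = p ^ ((a : ℕ) * n) := by rw [hqa, ← pow_mul]
  set ψ : K →ₐ[Fq] K :=
    { (iterateFrobenius K p ((a : ℕ) * n) : K →+* K) with
      commutes' := fun r => by
        show iterateFrobenius K p ((a : ℕ) * n) _ = _
        rw [iterateFrobenius_def, ← map_pow, ← hqn]
        congr 1
        have := FiniteField.pow_card_pow n r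
        rwa [hcard] at this } with hψ
  have hψx : ∀ z : K, ψ z = z ^ q ^ n := by
    intro z
    show iterateFrobenius K p ((a : ℕ) * n) z = _
    rw [iterateFrobenius_def, hqn]
  have hgne : (X ^ q ^ n - X : Fq[X]) ≠ 0 :=
    FiniteField.X_pow_card_pow_sub_X_ne_zero Fq hn hq1
  have htop : (⊤ : Subalgebra Fq K) ≤ AlgHom.equalizer ψ (AlgHom.id Fq K) := by
    rw [← show Algebra.adjoin Fq ((X ^ q ^ n - X : Fq[X]).rootSet K) = ⊤ from
      Polynomial.SplittingField.adjoin_rootSet (X ^ q ^ n - X : Fq[X])]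
    apply Algebra.adjoin_le
    intro z hz
    rw [Polynomial.mem_rootSet_of_ne hgne] at hz
    simp only [map_sub, map_pow, Polynomial.aeval_X, sub_eq_zero] at hz
    show ψ z = z
    rw [hψx, hz]
  have hx := htop (show x ∈ (⊤ : Subalgebra Fq K) from Algebra.mem_top)
  rw [AlgHom.mem_equalizer] at hx
  rw [← hψx x, hx]
  rfl

lemma KF_card (hcard : Fintype.card Fq = q) (hn : n ≠ 0) :
    Nat.card (KF Fq q n) = q ^ n := by
  set K := KF Fq q n
  haveI : Fintype K := Fintype.ofFinite K
  set p := ringChar Fq with hpdef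
  haveI hcharFq : CharP Fq p := ringChar.charP Fq
  obtain ⟨a, hp, hqa⟩ := FiniteField.card Fq p
  rw [hcard] at hqa
  haveI : Fact p.Prime := ⟨hp⟩
  have hq1 : 1 < q := hcard ▸ Fintype.one_lt_card
  have hpq : p ∣ q ^ n := dvd_trans (hqa ▸ dvd_pow_self p a.ne_zero) (dvd_pow_self q hn)
  have hsep : (X ^ q ^ n - X : Fq[X]).Separable := galois_poly_separable p (q ^ n) hpq
  have key : Fintype.card ((X ^ q ^ n - X : Fq[X]).rootSet K) =
      (X ^ q ^ n - X : Fq[X]).natDegree :=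
    Polynomial.card_rootSet_eq_natDegree hsep (Polynomial.SplittingField.splits _)
  have hdeg : (X ^ q ^ n - X : Fq[X]).natDegree = q ^ n :=
    FiniteField.X_pow_card_pow_sub_X_natDegree_eq Fq hn hq1
  have hgne : (X ^ q ^ n - X : Fq[X]) ≠ 0 :=
    FiniteField.X_pow_card_pow_sub_X_ne_zero Fq hn hq1
  have huniv : (X ^ q ^ n - X : Fq[X]).rootSet K = Set.univ := by
    rw [Set.eq_univ_iff_forall]
    intro x
    rw [Polynomial.mem_rootSet_of_ne hgne]
    simp only [map_sub, map_pow, Polynomial.aeval_X, sub_eq_zero]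
    exact KF_pow_card hcard hn x
  rw [hdeg] at key
  have key2 : Nat.card ((X ^ q ^ n - X : Fq[X]).rootSet K) = q ^ n := by
    rw [Nat.card_eq_fintype_card]; convert key using 2
  calc Nat.card K = Nat.card (Set.univ : Set K) := (Nat.card_congr (Equiv.Set.univ K)).symm
    _ = Nat.card ((X ^ q ^ n - X : Fq[X]).rootSet K) := by rw [huniv]
    _ = q ^ n := key2

lemma KF_finrank (hcard : Fintype.card Fq = q) (hn : n ≠ 0) :
    Module.finrank Fq (KF Fq q n) = n := by
  haveI : Fintype (KF Fq q n) := Fintype.ofFinite _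
  have h1 : Fintype.card (KF Fq q n) =
      Fintype.card Fq ^ Module.finrank Fq (KF Fq q n) := Module.card_eq_pow_finrank
  have h2 : Fintype.card (KF Fq q n) = q ^ n := by
    rw [← Nat.card_eq_fintype_card, KF_card hcard hn]
  have h3 := h1.symm.trans h2
  rw [hcard] at h3
  have hq1 : 1 < q := hcard ▸ Fintype.one_lt_card
  exact Nat.pow_right_injective hq1 h3

end Kconstruction


section fp
variable {Fq : Type} [Field Fq] [Fintype Fq] {q n : ℕ}

lemma minpoly_natDegree_eq (hcard : Fintype.card Fq = q)
    {K : Type*} [Field K] [Algebra Fq K] [FiniteDimensional Fq K]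
    (hrank : Module.finrank Fq K = n) (hn : n ≠ 0)
    (α : K) (H : ∀ d, d ∣ n → d < n → α ^ q ^ d ≠ α) :
    (minpoly Fq α).natDegree = n := by
  have hint : IsIntegral Fq α := IsIntegral.of_finite Fq α
  set d₀ := (minpoly Fq α).natDegree with hd₀
  have hfr : Module.finrank Fq Fq⟮α⟯ = d₀ := IntermediateField.adjoin.finrank hint
  have hdvd : d₀ ∣ n := by
    refine ⟨Module.finrank Fq⟮α⟯ K, ?_⟩
    rw [← hrank, ← hfr, Module.finrank_mul_finrank]
  haveI : Finite Fq⟮α⟯ := Module.finite_of_finite Fq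
  haveI : Fintype Fq⟮α⟯ := Fintype.ofFinite _
  have hcardL : Fintype.card Fq⟮α⟯ = q ^ d₀ := by
    have h := Module.card_eq_pow_finrank (K := Fq) (V := Fq⟮α⟯)
    rw [hcard, hfr] at h
    exact h
  have hgen : (IntermediateField.AdjoinSimple.gen Fq α) ^ q ^ d₀
      = IntermediateField.AdjoinSimple.gen Fq α := by
    rw [← hcardL]
    exact FiniteField.pow_card _
  have hαpow : α ^ q ^ d₀ = α := by
    have h := congrArg (algebraMap Fq⟮α⟯ K) hgen
    rwa [map_pow, IntermediateField.AdjoinSimple.algebraMap_gen] at h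
  have hle : d₀ ≤ n := Nat.le_of_dvd (Nat.pos_of_ne_zero hn) hdvd
  rcases lt_or_eq_of_le hle with h | h
  · exact absurd hαpow (H d₀ hdvd h)
  · exact h

lemma exists_frobq (hcard : Fintype.card Fq = q)
    (K : Type*) [Field K] [Algebra Fq K] : ∃ φ : K →+* K, ∀ x, φ x = x ^ q := by
  set p := ringChar Fq with hpdef
  haveI hcharFq : CharP Fq p := ringChar.charP Fq
  obtain ⟨a, hp, hqa⟩ := FiniteField.card Fq p
  rw [hcard] at hqa
  haveI : Fact p.Prime := ⟨hp⟩
  haveI : CharP K p := charP_of_injective_algebraMap (algebraMap Fq K).injective p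
  haveI : ExpChar K p := ExpChar.prime hp
  exact ⟨iterateFrobenius K p (a : ℕ), fun x => by rw [iterateFrobenius_def, ← hqa]⟩

lemma charpoly_coeff {K : Type*} [Field K] {w : ℕ} (hw : w ≤ n) (α : K) :
    (∏ i ∈ range n, (X - C (α ^ q ^ i))).coeff (n - w) =
      (-1 : K) ^ w * ∑ s ∈ powersetCard w (range n), ∏ i ∈ s, α ^ q ^ i := by
  have hcard : Multiset.card ((range n).val.map (fun i => α ^ q ^ i)) = n := by simp
  have h := Multiset.prod_X_sub_C_coeff ((range n).val.map (fun i => α ^ q ^ i))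
    (k := n - w) (by rw [hcard]; omega)
  rw [Multiset.map_map] at h
  have hprod : ((range n).val.map (fun i => X - C (α ^ q ^ i))).prod
      = ∏ i ∈ range n, (X - C (α ^ q ^ i)) := rfl
  rw [hcard] at h
  have hnw : n - (n - w) = w := by omega
  rw [hnw] at h
  rw [← hprod]
  show ((Multiset.map ((fun t => X - C t) ∘ fun i => α ^ q ^ i) (range n).val).prod).coeff (n-w)
    = _
  rw [h, Finset.esymm_map_val]

lemma charpoly_monic {K : Type*} [Field K] (α : K) :
    (∏ i ∈ range n, (X - C (α ^ q ^ i))).Monic :=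
  monic_prod_of_monic _ _ fun i _ => monic_X_sub_C _

lemma charpoly_natDegree {K : Type*} [Field K] (α : K) :
    (∏ i ∈ range n, (X - C (α ^ q ^ i))).natDegree = n := by
  rw [natDegree_prod _ _ (fun i _ => X_sub_C_ne_zero _)]
  simp only [natDegree_X_sub_C]
  rw [Finset.sum_const, card_range, smul_eq_mul, mul_one]

lemma charpoly_lift (hcard : Fintype.card Fq = q)
    {K : Type*} [Field K] [Fintype K] [Algebra Fq K] (hKcard : Fintype.card K = q ^ n)
    (α : K) :
    ∃ P₀ : Fq[X], Polynomial.map (algebraMap Fq K) P₀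
      = ∏ i ∈ range n, (X - C (α ^ q ^ i)) := by
  obtain ⟨φ, hφ⟩ := exists_frobq hcard K
  set Pb : K[X] := ∏ i ∈ range n, (X - C (α ^ q ^ i)) with hPb
  have hαqn : α ^ q ^ n = α := by rw [← hKcard]; exact FiniteField.pow_card α
  have hmap : Pb.map φ = Pb := by
    rw [hPb, Polynomial.map_prod]
    have h1 : ∀ i ∈ range n, (X - C (α ^ q ^ i)).map φ = X - C (α ^ q ^ (i+1)) := by
      intro i _
      rw [Polynomial.map_sub, map_X, map_C, hφ, ← pow_mul, ← pow_succ]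
    rw [Finset.prod_congr rfl h1]
    have h2 := Finset.prod_range_succ (fun i => (X - C (α ^ q ^ i) : K[X])) n
    have h3 := Finset.prod_range_succ' (fun i => (X - C (α ^ q ^ i) : K[X])) n
    have hfn : (X - C (α ^ q ^ n) : K[X]) = X - C (α ^ q ^ 0) := by
      rw [hαqn, pow_zero, pow_one]
    rw [h2, hfn] at h3
    exact mul_right_cancel₀ (X_sub_C_ne_zero _) h3.symm
  have hcoeff : ∀ i, Pb.coeff i ∈ Set.range (algebraMap Fq K) := by
    intro i
    have hfix : (Pb.coeff i) ^ q = Pb.coeff i := by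
      conv_rhs => rw [← hmap]
      rw [Polynomial.coeff_map, hφ]
    obtain ⟨y, hy⟩ := exists_algebraMap_eq_of_pow_card hcard hfix
    exact ⟨y, hy⟩
  have hl : Pb ∈ Polynomial.lifts (algebraMap Fq K) :=
    (Polynomial.lifts_iff_coeff_lifts Pb).mpr hcoeff
  exact (Polynomial.mem_lifts Pb).mp hl
end fp

section delta
variable {q n : ℕ} [NeZero (q ^ n - 1)] {K : Type*} [Field K]

lemma deltaFn_zero_eq (k : ZMod (q ^ n - 1)) :
    deltaFn K q n 0 k = if k = 0 then 1 else 0 := by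
  unfold deltaFn
  have hiff : (∃ s ∈ Finset.powersetCard 0 (Finset.range n), k.val = ∑ i ∈ s, q ^ i) ↔ k = 0 := by
    rw [Finset.powersetCard_zero]
    constructor
    · rintro ⟨s, hs, hsum⟩
      rw [Finset.mem_singleton] at hs
      subst hs
      simp only [Finset.sum_empty] at hsum
      exact (ZMod.val_eq_zero k).mp hsum
    · rintro rfl
      exact ⟨∅, Finset.mem_singleton_self _, by simp [ZMod.val_zero]⟩
  rw [if_congr hiff rfl rfl]

lemma hatF_deltaFn_zero {α : K} : hatF (deltaFn K q n 0) α = 1 := by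
  rw [show deltaFn K q n 0 = fun i : ZMod (q ^ n - 1) => if i = 0 then (1 : K) else 0 from
    funext deltaFn_zero_eq]
  exact hatF_deltaZero

lemma sum_pow_bounds (hq : 2 ≤ q) (hn : 1 ≤ n) {w : ℕ} (hw1 : 1 ≤ w) (hwn : w ≤ n)
    (hq2 : q = 2 → w ≠ n) {s : Finset ℕ} (hs : s ∈ Finset.powersetCard w (Finset.range n)) :
    1 ≤ ∑ i ∈ s, q ^ i ∧ ∑ i ∈ s, q ^ i ≤ q ^ n - 2 := by
  obtain ⟨hsub, hcards⟩ := Finset.mem_powersetCard.mp hs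
  have hqn1 : 1 ≤ q ^ n := Nat.one_le_pow _ _ (by omega)
  have hlow : 1 ≤ ∑ i ∈ s, q ^ i := by
    obtain ⟨j, hj⟩ := Finset.card_pos.mp (show 0 < s.card by omega)
    calc 1 ≤ q ^ j := Nat.one_le_pow _ _ (by omega)
      _ ≤ ∑ i ∈ s, q ^ i := Finset.single_le_sum (fun i _ => Nat.zero_le _) hj
  refine ⟨hlow, ?_⟩
  by_cases hw : w = n
  · have hq3 : 3 ≤ q := by
      rcases Nat.lt_or_ge q 3 with h | h
      · interval_cases q
        · exact absurd hw (hq2 rfl)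
      · exact h
    have hseq : s = Finset.range n := by
      apply Finset.eq_of_subset_of_card_le hsub
      rw [Finset.card_range, hcards, hw]
    rw [hseq]
    have hg := geom_mul hq n
    have h2 : 2 * ∑ i ∈ Finset.range n, q ^ i ≤ (q - 1) * ∑ i ∈ Finset.range n, q ^ i :=
      Nat.mul_le_mul_right _ (by omega)
    have hlow' : 1 ≤ ∑ i ∈ Finset.range n, q ^ i := by
      calc 1 ≤ q ^ 0 := by simp
        _ ≤ ∑ i ∈ Finset.range n, q ^ i :=
          Finset.single_le_sum (fun i _ => Nat.zero_le _) (Finset.mem_range.mpr (by omega))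
    omega
  · have hssub : s ⊂ Finset.range n := by
      refine Finset.ssubset_iff_subset_ne.mpr ⟨hsub, ?_⟩
      intro hcon
      rw [hcon, Finset.card_range] at hcards
      exact hw hcards.symm
    obtain ⟨j, hjmem, hjns⟩ := Finset.exists_of_ssubset hssub
    have hins : insert j s ⊆ Finset.range n := by
      intro x hx
      rcases Finset.mem_insert.mp hx with rfl | hx'
      · exact hjmem
      · exact hsub hx'
    have h1 : q ^ j + ∑ i ∈ s, q ^ i ≤ q ^ n - 1 := by
      rw [← Finset.sum_insert hjns]
      exact sum_pow_le_of_subset hq hins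
    have h2 : 1 ≤ q ^ j := Nat.one_le_pow _ _ (by omega)
    omega

lemma hatF_deltaFn (hq : 2 ≤ q) (hn : 1 ≤ n) {w : ℕ} (hw1 : 1 ≤ w) (hwn : w ≤ n)
    (hq2 : q = 2 → w ≠ n) {α : K} (hα : α ^ (q ^ n - 1) = 1) :
    hatF (deltaFn K q n w) α
      = ∑ s ∈ Finset.powersetCard w (Finset.range n), ∏ i ∈ s, α ^ q ^ i := by
  have hqn2 : 2 ≤ q ^ n := le_trans hq (Nat.le_self_pow (by omega) q)
  have hlt : ∀ s ∈ Finset.powersetCard w (Finset.range n),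
      (∑ i ∈ s, q ^ i) < q ^ n - 1 := by
    intro s hs
    have := (sum_pow_bounds hq hn hw1 hwn hq2 hs).2
    omega
  unfold hatF deltaFn
  rw [Finset.sum_congr rfl (fun k _ => by rw [ite_mul, one_mul, zero_mul])]
  rw [← Finset.sum_filter]
  refine (Finset.sum_bij
    (fun (s : Finset ℕ) (hs : s ∈ Finset.powersetCard w (Finset.range n)) =>
      ((∑ i ∈ s, q ^ i : ℕ) : ZMod (q ^ n - 1))) ?_ ?_ ?_ ?_).symm
  · intro s hs
    rw [Finset.mem_filter]
    exact ⟨Finset.mem_univ _, ⟨s, hs, ZMod.val_cast_of_lt (hlt s hs)⟩⟩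
  · intro s hs t ht hst
    apply sum_pow_inj hq n s t (Finset.mem_powersetCard.mp hs).1 (Finset.mem_powersetCard.mp ht).1
    have h := congrArg ZMod.val hst
    rwa [ZMod.val_cast_of_lt (hlt s hs), ZMod.val_cast_of_lt (hlt t ht)] at h
  · intro k hk
    rw [Finset.mem_filter] at hk
    obtain ⟨-, s, hs, hsum⟩ := hk
    refine ⟨s, hs, ?_⟩
    show ((∑ i ∈ s, q ^ i : ℕ) : ZMod (q ^ n - 1)) = k
    rw [← hsum]
    exact ZMod.natCast_rightInverse k
  · intro s hs
    rw [ZMod.val_cast_of_lt (hlt s hs), ← Finset.prod_pow_eq_pow_sum]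
end delta

/-- Lemma 4.2: if `Δ_{w,c}` has least period `r` with `r ∤ (q^n-1)/Φ_n(q)`,
then there exists a monic irreducible polynomial `P` of degree `n` over `F_q`
with `[x^{n-w}]P(x) = c`. -/
theorem exists_irreducible_of_Delta_leastPeriod
    (q n w : ℕ) (Fq : Type) [Field Fq] [Fintype Fq] (hcard : Fintype.card Fq = q)
    (hn : 2 ≤ n) (hw1 : 1 ≤ w) (hwn : w ≤ n) (c : Fq) (hq2 : q = 2 → w ≠ n)
    [NeZero (q ^ n - 1)]
    (r : ℕ) (hr : IsLeastPeriod (Delta Fq q n w c) r)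
    (hdvd : ¬ r ∣ (q ^ n - 1) / ((Polynomial.cyclotomic n ℤ).eval (q : ℤ)).toNat) :
    ∃ P : Polynomial Fq, P.Monic ∧ Irreducible P ∧ P.natDegree = n ∧
      P.coeff (n - w) = c := by
  classical
  by_contra hcon
  push_neg at hcon
  have hq : 2 ≤ q := by rw [← hcard]; exact Fintype.one_lt_card
  have hn0 : n ≠ 0 := by omega
  have hqn2 : 2 ≤ q ^ n := le_trans hq (Nat.le_self_pow hn0 q)
  set M := (q ^ n - 1) / ((Polynomial.cyclotomic n ℤ).eval (q : ℤ)).toNat with hMdef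
  haveI : Fintype (KF Fq q n) := Fintype.ofFinite _
  have hKcard : Fintype.card (KF Fq q n) = q ^ n := by
    rw [← Nat.card_eq_fintype_card]; exact KF_card hcard hn0
  have hKrank : Module.finrank Fq (KF Fq q n) = n := KF_finrank hcard hn0
  set ι : Fq →+* KF Fq q n := algebraMap Fq (KF Fq q n) with hι
  have hαN : ∀ α : KF Fq q n, α ≠ 0 → α ^ (q ^ n - 1) = 1 := by
    intro α h
    have h2 := FiniteField.pow_card_sub_one_eq_one α h
    rwa [hKcard] at h2
  set DK : ZMod (q ^ n - 1) → KF Fq q n := fun k => ι (Delta Fq q n w c k) with hDK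
  have hDKval : DK = fun k => deltaFn (KF Fq q n) q n 0 k -
      convPow (fun j => (-1 : KF Fq q n) ^ w * deltaFn (KF Fq q n) q n w j
        - ι c * deltaFn (KF Fq q n) q n 0 j) (q - 1) k := by
    funext k
    show ι (Delta Fq q n w c k) = _
    unfold Delta
    rw [map_sub, deltaFn_map, convPow_map]
    congr 2
    funext j
    rw [map_sub, map_mul, map_mul, map_pow, map_neg, map_one, deltaFn_map, deltaFn_map]
  have hDhat : ∀ α : KF Fq q n, α ≠ 0 → hatF DK α
      = 1 - ((-1 : KF Fq q n) ^ w *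
          (∑ s ∈ Finset.powersetCard w (Finset.range n), ∏ i ∈ s, α ^ q ^ i)
          - ι c) ^ (q - 1) := by
    intro α hα0
    have hα := hαN α hα0
    rw [hDKval, hatF_sub, hatF_deltaFn_zero, hatF_convPow _ hα, hatF_sub,
      hatF_const_mul, hatF_const_mul, hatF_deltaFn_zero,
      hatF_deltaFn hq (by omega) hw1 hwn hq2 hα, mul_one]
  have hmain : ∀ α : KF Fq q n, α ≠ 0 → hatF DK α = 0 ∨ α ^ M = 1 := by
    intro α hα0
    obtain ⟨P₀, hP₀⟩ := charpoly_lift hcard hKcard α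
    have hlift : ι (P₀.coeff (n - w))
        = (-1 : KF Fq q n) ^ w *
          ∑ s ∈ Finset.powersetCard w (Finset.range n), ∏ i ∈ s, α ^ q ^ i := by
      have h := charpoly_coeff (q := q) (n := n) hwn α
      rw [← hP₀, Polynomial.coeff_map] at h
      exact h
    by_cases ht : P₀.coeff (n - w) - c = 0
    · right
      have hcoeffc : P₀.coeff (n - w) = c := by rwa [sub_eq_zero] at ht
      by_cases hdeg : ∀ d, d ∣ n → d < n → α ^ q ^ d ≠ α
      · exfalso
        have hmind : (minpoly Fq α).natDegree = n :=
          minpoly_natDegree_eq hcard hKrank hn0 α hdeg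
        have hint : IsIntegral Fq α := IsIntegral.of_finite Fq α
        have haev : Polynomial.aeval α P₀ = 0 := by
          rw [Polynomial.aeval_def, Polynomial.eval₂_eq_eval_map]
          show Polynomial.eval α (Polynomial.map ι P₀) = 0
          rw [hP₀, Polynomial.eval_prod]
          apply Finset.prod_eq_zero (Finset.mem_range.mpr (show 0 < n by omega))
          simp
        have hmdvd : minpoly Fq α ∣ P₀ := minpoly.dvd Fq α haev
        have hmonicmap : (Polynomial.map ι P₀).Monic := by
          rw [hP₀]; exact charpoly_monic α
        have hP₀monic : P₀.Monic :=
          (Function.Injective.monic_map_iff ι.injective).mpr hmonicmap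
        have hP₀deg : P₀.natDegree = n := by
          have h := charpoly_natDegree (q := q) (n := n) α
          rw [← hP₀, Polynomial.natDegree_map_eq_of_injective ι.injective] at h
          exact h
        have heq : minpoly Fq α = P₀ := by
          apply Polynomial.eq_of_dvd_of_natDegree_le_of_leadingCoeff hmdvd
          · rw [hP₀deg, hmind]
          · rw [(minpoly.monic hint).leadingCoeff, hP₀monic.leadingCoeff]
        exact hcon P₀ hP₀monic (heq ▸ minpoly.irreducible hint) hP₀deg hcoeffc
      · push_neg at hdeg
        obtain ⟨d, hd, hdn, hαd⟩ := hdeg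
        have hdpos : 0 < d := Nat.pos_of_ne_zero
          (by rintro rfl; rw [zero_dvd_iff] at hd; exact hn0 hd)
        have hqd1 : 1 ≤ q ^ d := Nat.one_le_pow _ _ (by omega)
        have hord : α ^ (q ^ d - 1) = 1 := by
          have h2 : α ^ (q ^ d - 1) * α = 1 * α := by
            rw [one_mul, ← pow_succ, show q ^ d - 1 + 1 = q ^ d by omega, hαd]
          exact mul_right_cancel₀ hα0 h2
        obtain ⟨e, he⟩ := qd_dvd_M (n := n) hq hd hdn hdpos
        rw [hMdef, he, pow_mul, hord, one_pow]
    · left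
      rw [hDhat α hα0]
      have htK : ((-1 : KF Fq q n) ^ w *
          (∑ s ∈ Finset.powersetCard w (Finset.range n), ∏ i ∈ s, α ^ q ^ i)
          - ι c) = ι (P₀.coeff (n - w) - c) := by
        rw [map_sub, hlift]
      rw [htK, ← map_pow]
      have h1 : (P₀.coeff (n - w) - c) ^ (q - 1) = 1 := by
        have h2 := FiniteField.pow_card_sub_one_eq_one _ ht
        rwa [hcard] at h2
      rw [h1, map_one, sub_self]
  -- Step 2: M is a period
  have hNcard : Fintype.card (KF Fq q n)ˣ = q ^ n - 1 := by
    rw [Fintype.card_units, hKcard]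
  set g : ZMod (q ^ n - 1) → Fq :=
    fun k => Delta Fq q n w c (k + ((M : ℕ) : ZMod (q ^ n - 1))) - Delta Fq q n w c k with hg
  set Pg : Polynomial (KF Fq q n) :=
    ∑ k : ZMod (q ^ n - 1), Polynomial.C (ι (g k)) * Polynomial.X ^ k.val with hPg
  have hgk : ∀ k, ι (g k) = DK (k + ((M : ℕ) : ZMod (q ^ n - 1))) - DK k := by
    intro k
    rw [hg]
    show ι (Delta Fq q n w c _ - Delta Fq q n w c k) = _
    rw [map_sub]
  have hPgdeg : Pg.natDegree < q ^ n - 1 := by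
    have hb : Pg.natDegree ≤ q ^ n - 2 := by
      rw [hPg]
      apply Polynomial.natDegree_sum_le_of_forall_le
      intro k _
      refine le_trans (Polynomial.natDegree_C_mul_X_pow_le _ _) ?_
      have hv := ZMod.val_lt k
      omega
    omega
  have hPgeval : ∀ u : (KF Fq q n)ˣ, Pg.eval (u : KF Fq q n) = 0 := by
    intro u
    have hα0 : (u : KF Fq q n) ≠ 0 := Units.ne_zero u
    have hα := hαN _ hα0
    have heval : Pg.eval (u : KF Fq q n) = hatF (fun k => ι (g k)) (u : KF Fq q n) := by
      rw [hPg, Polynomial.eval_finset_sum]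
      unfold hatF
      apply Finset.sum_congr rfl
      intro k _
      rw [Polynomial.eval_mul, Polynomial.eval_C, Polynomial.eval_pow, Polynomial.eval_X]
    have hgsplit : hatF (fun k => ι (g k)) (u : KF Fq q n)
        = hatF (fun k => DK (k + ((M : ℕ) : ZMod (q ^ n - 1)))) (u : KF Fq q n)
          - hatF DK (u : KF Fq q n) := by
      rw [← hatF_sub]
      unfold hatF
      apply Finset.sum_congr rfl
      intro k _
      exact congrArg (fun z => z * (u : KF Fq q n) ^ k.val) (hgk k)
    have hshift : hatF (fun k => DK (k + ((M : ℕ) : ZMod (q ^ n - 1)))) (u : KF Fq q n)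
        * (u : KF Fq q n) ^ (((M : ℕ) : ZMod (q ^ n - 1))).val = hatF DK (u : KF Fq q n) := by
      unfold hatF
      rw [Finset.sum_mul]
      apply Fintype.sum_equiv (Equiv.addRight ((M : ℕ) : ZMod (q ^ n - 1)))
      intro k
      simp only [Equiv.coe_addRight]
      rw [pow_val_add hα, ← mul_assoc]
    have hMpow : (u : KF Fq q n) ^ (((M : ℕ) : ZMod (q ^ n - 1))).val
        = (u : KF Fq q n) ^ M := pow_val_natCast hα M
    rcases hmain (u : KF Fq q n) hα0 with h0 | h1
    · have hne : (u : KF Fq q n) ^ (((M : ℕ) : ZMod (q ^ n - 1))).val ≠ 0 :=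
        pow_ne_zero _ hα0
      have hsh0 : hatF (fun k => DK (k + ((M : ℕ) : ZMod (q ^ n - 1)))) (u : KF Fq q n) = 0 := by
        have h2 := hshift
        rw [h0] at h2
        exact (mul_eq_zero.mp h2).resolve_right hne
      rw [heval, hgsplit, h0, hsh0, sub_zero]
    · have hone : (u : KF Fq q n) ^ (((M : ℕ) : ZMod (q ^ n - 1))).val = 1 := by
        rw [hMpow, h1]
      rw [heval, hgsplit]
      rw [hone, mul_one] at hshift
      rw [hshift, sub_self]
  have hPg0 : Pg = 0 := by
    apply Polynomial.eq_zero_of_natDegree_lt_card_of_eval_eq_zero Pg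
      (f := fun u : (KF Fq q n)ˣ => (u : KF Fq q n)) Units.val_injective hPgeval
    rw [hNcard]
    exact hPgdeg
  have hg0 : ∀ k, g k = 0 := by
    intro k
    have hc := congrArg (fun P : Polynomial (KF Fq q n) => P.coeff k.val) hPg0
    simp only [Polynomial.coeff_zero] at hc
    rw [hPg] at hc
    rw [Polynomial.finset_sum_coeff] at hc
    have hterm : ∀ j : ZMod (q ^ n - 1),
        (Polynomial.C (ι (g j)) * Polynomial.X ^ j.val).coeff k.val
        = if j = k then ι (g j) else 0 := by
      intro j
      rw [Polynomial.coeff_C_mul, Polynomial.coeff_X_pow]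
      by_cases hjk : j = k
      · subst hjk; simp
      · have hv : ¬ (k.val = j.val) := fun h => hjk (ZMod.val_injective _ h.symm)
        rw [if_neg hv, if_neg hjk, mul_zero]
    rw [Finset.sum_congr rfl (fun j _ => hterm j),
      Finset.sum_ite_eq' Finset.univ k (fun j => ι (g j))] at hc
    simp only [Finset.mem_univ, if_true] at hc
    apply ι.injective
    rw [hc, map_zero]
  have hMper : IsPeriodOf (Delta Fq q n w c) M := by
    intro m
    have h := hg0 m
    rw [hg] at h
    exact sub_eq_zero.mp h
  exact hdvd (least_period_dvd hr hMper)
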